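/- If p and q are both periods of a string w, and p + q ≤ |w| + gcd(p,q), then gcd(p,q) is also a period of w. -/

import Mathlib

/-- `p` is a period of the string (list) `w`: `p ≥ 1` and `w[i] = w[i+p]`
for all indices with `i + p` still inside `w`. -/
def IsPeriod {α : Type*} (w : List α) (p : ℕ) : Prop :=
  1 ≤ p ∧ ∀ i, i + p < w.length → w[i]? = w[i + p]?

lemma period_steps {α : Type*} {w : List α} {d : ℕ} (h : IsPeriod w d) :
    ∀ t j, j + t * d < w.length → w[j]? = w[(j + t * d)]? := by
  intro t
  induction t with
  | zero => simp
  | succ t ih =>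
    intro j hj
    have hd1 : 1 ≤ d := h.1
    rw [Nat.succ_mul] at hj ⊢
    have h1 : j + t * d < w.length := by omega
    have h2 := h.2 (j + t * d) (by omega)
    rw [ih j h1, h2]
    ring_nf

lemma period_reach {α : Type*} {w : List α} {d : ℕ} (h : IsPeriod w d) {a b : ℕ}
    (hab : a ≤ b) (hdvd : d ∣ b - a) (hb : b < w.length) : w[a]? = w[b]? := by
  obtain ⟨t, ht⟩ := hdvd
  have hb2 : b = a + t * d := by rw [Nat.mul_comm]; omega
  rw [hb2]
  exact period_steps h t a (by omega)

lemma core {α : Type*} (p q : ℕ) (w : List α) (hlt : p < q) (hnd : ¬ p ∣ q)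
    (IH : ∀ p' q' (w' : List α), p' + q' < p + q → IsPeriod w' p' → IsPeriod w' q' →
      p' + q' ≤ w'.length + Nat.gcd p' q' → IsPeriod w' (Nat.gcd p' q'))
    (hp : IsPeriod w p) (hq : IsPeriod w q)
    (h : p + q ≤ w.length + Nat.gcd p q) : IsPeriod w (Nat.gcd p q) := by
  set n := w.length with hn
  set d := Nat.gcd p q with hd
  have hp1 : 1 ≤ p := hp.1
  have hq1 : 1 ≤ q := hq.1
  have hd1 : 1 ≤ d := Nat.gcd_pos_of_pos_left _ hp1
  have hdp : d ∣ p := Nat.gcd_dvd_left p q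
  have hdq : d ∣ q := Nat.gcd_dvd_right p q
  have hdltp : d < p := lt_of_le_of_ne (Nat.le_of_dvd hp1 hdp)
    (fun he => hnd (he ▸ hdq))
  obtain ⟨r, hr⟩ : ∃ r, q = p + r := ⟨q - p, by omega⟩
  have hr1 : 1 ≤ r := by omega
  have hdr : d ∣ r := by
    have h' := Nat.dvd_sub hdq hdp
    have : q - p = r := by omega
    rwa [this] at h'
  have hdlr : d ≤ r := Nat.le_of_dvd hr1 hdr
  have h2d : 2 * d ≤ p := by
    obtain ⟨c, hc⟩ := hdp
    rcases c with _ | _ | c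
    · simp at hc; omega
    · simp at hc; omega
    · have : d * (c + 1 + 1) = d * c + 2 * d := by ring
      omega
  have hpn : p ≤ n := by omega
  set m := n - p with hm
  set u := w.take m with hu
  have hul : u.length = m := by
    rw [hu, List.length_take]; omega
  have hget : ∀ a, a < m → u[a]? = w[a]? := by
    intro a ha
    rw [hu]
    exact List.getElem?_take_of_lt (by omega)
  have hu_p : IsPeriod u p := by
    refine ⟨hp1, fun i hi => ?_⟩
    rw [hul] at hi
    rw [hget i (by omega), hget (i + p) (by omega)]
    exact hp.2 i (by omega)
  have hu_r : IsPeriod u r := by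
    refine ⟨hr1, fun i hi => ?_⟩
    rw [hul] at hi
    rw [hget i (by omega), hget (i + r) (by omega)]
    have e1 := hp.2 (i + r) (by omega)
    have e2 := hq.2 i (by omega)
    rw [show i + q = i + r + p by omega] at e2
    rw [e2, e1]
  have hgcd_pr : Nat.gcd p r = d := by
    rw [hd, hr, show p + r = r + p from Nat.add_comm p r, Nat.gcd_add_self_right]
  have hu_d : IsPeriod u d := by
    have hih := IH p r u (by omega) hu_p hu_r (by rw [hul, hgcd_pr]; omega)
    rwa [hgcd_pr] at hih
  refine ⟨hd1, ?_⟩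
  intro i
  induction i using Nat.strong_induction_on with
  | _ i IHi =>
    intro hi
    by_cases hA : i + d + p < n
    · have e := hu_d.2 i (by rw [hul]; omega)
      rwa [hget i (by omega), hget (i + d) (by omega)] at e
    · by_cases hB : p ≤ i
      · have e0 := IHi (i - p) (by omega) (by omega)
        have e1 := hp.2 (i - p) (by omega)
        have e2 := hp.2 (i - p + d) (by omega)
        rw [show i - p + p = i by omega] at e1
        rw [show i - p + d + p = i + d by omega] at e2
        rw [← e1, e0, e2]
      · push_neg at hB
        have hq2d : q ≤ i + 2 * d := by omega
        have hri : r ≤ i := by omega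
        have hipn : i + p < n := by omega
        have e1 := hp.2 i hipn
        have e2 := hq.2 (i - r) (by omega)
        rw [show i - r + q = i + p by omega] at e2
        have e3 := hp.2 (i + d - p) (by omega)
        rw [show i + d - p + p = i + d by omega] at e3
        set j1 := i - r with hj1
        set j2 := i + d - p with hj2
        have hj1m : j1 < m := by omega
        have hj2m : j2 < m := by omega
        have ebridge : u[j1]? = u[j2]? := by
          rcases le_total j1 j2 with hle | hle
          · have hdvd : d ∣ j2 - j1 := by
              have h' := Nat.dvd_sub (Nat.dvd_add (dvd_refl d) hdr) hdp
              have : d + r - p = j2 - j1 := by omega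
              rwa [this] at h'
            exact period_reach hu_d hle hdvd (by omega)
          · have hdvd : d ∣ j1 - j2 := by
              have h' := Nat.dvd_sub hdp (Nat.dvd_add (dvd_refl d) hdr)
              have : p - (d + r) = j1 - j2 := by omega
              rwa [this] at h'
            exact (period_reach hu_d hle hdvd (by omega)).symm
        rw [hget j1 hj1m, hget j2 hj2m] at ebridge
        rw [e1, ← e2, ebridge, e3]

lemma aux_fw {α : Type*} : ∀ k (p q : ℕ) (w : List α), p + q ≤ k →
    IsPeriod w p → IsPeriod w q → p + q ≤ w.length + Nat.gcd p q →
    IsPeriod w (Nat.gcd p q) := by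
  intro k
  induction k using Nat.strong_induction_on with
  | _ k IH =>
    intro p q w hk hp hq h
    by_cases hpq : p ∣ q
    · rw [Nat.gcd_eq_left hpq]; exact hp
    · by_cases hqp : q ∣ p
      · rw [Nat.gcd_eq_right hqp]; exact hq
      · have hIH : ∀ p' q' (w' : List α), p' + q' < p + q → IsPeriod w' p' →
            IsPeriod w' q' → p' + q' ≤ w'.length + Nat.gcd p' q' →
            IsPeriod w' (Nat.gcd p' q') := by
          intro p' q' w' hlt hp' hq' h'
          exact IH (p' + q') (by omega) p' q' w' le_rfl hp' hq' h'
        rcases lt_trichotomy p q with hlt | heq | hlt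
        · exact core p q w hlt hpq hIH hp hq h
        · exact absurd (heq ▸ dvd_refl p) hpq
        · have hIH' : ∀ p' q' (w' : List α), p' + q' < q + p → IsPeriod w' p' →
              IsPeriod w' q' → p' + q' ≤ w'.length + Nat.gcd p' q' →
              IsPeriod w' (Nat.gcd p' q') := by
            intro p' q' w' hlt' hp' hq' h'
            exact hIH p' q' w' (by omega) hp' hq' h'
          have := core q p w hlt hqp hIH' hq hp (by rw [Nat.gcd_comm]; omega)
          rwa [Nat.gcd_comm] at this

/-- Fine–Wilf periodicity lemma. -/
theorem periodicity_lemma {α : Type*} (w : List α) (p q : ℕ)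
    (hp : IsPeriod w p) (hq : IsPeriod w q)
    (h : p + q ≤ w.length + Nat.gcd p q) :
    IsPeriod w (Nat.gcd p q) := by
  exact aux_fw (p + q) p q w le_rfl hp hq h
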